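/- arXiv:2202.09222 — 5 statements merged into one kernel-verified Lean document; each statement's English description precedes it below -/
import Mathlib

section
/- Let n ≥ 2 and suppose levels l_1, ..., l_n of leaves in a full binary tree include two sibling leaves at level l_max and a leaf at level l_min with l_max > l_min. Replacing these three leaves with one leaf at level l_max − 1 and two leaves at level l_min + 1 (keeping the other n − 3 leaves fixed) changes the quantity (1/n) Σ_i 2^{l_i} by exactly −(3/n)(2^{l_max − 1} − 2^{l_min}), which is nonpositive, and is zero iff l_min = l_max − 1. -/
/-- The balancing operation: replacing two sibling leaves at level `lmax` and a leaf at
level `lmin < lmax` by one leaf at level `lmax - 1` and two leaves at level `lmin + 1`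
changes `S = (1/n) Σ 2^{l_i}` by exactly `-(3/n)(2^{lmax-1} - 2^{lmin})`, which is
nonpositive, and is zero iff `lmin = lmax - 1`. -/
theorem balancing_operation_decreases_mean
    (n : ℕ) (hn : 2 ≤ n) (L : Multiset ℕ) (hpos : ∀ l ∈ L, 1 ≤ l)
    (hcard : L.card = n)
    (lmax lmin : ℕ) (hlt : lmin < lmax)
    (hsub : ({lmax, lmax, lmin} : Multiset ℕ) ≤ L)
    (L' : Multiset ℕ)
    (hL' : L' = (L - {lmax, lmax, lmin}) + {lmax - 1, lmin + 1, lmin + 1}) :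
    (L.map (fun l => (2 : ℝ) ^ l)).sum / n - (L'.map (fun l => (2 : ℝ) ^ l)).sum / n
        = (3 / n) * ((2 : ℝ) ^ (lmax - 1) - 2 ^ lmin) ∧
    0 ≤ (3 / (n : ℝ)) * ((2 : ℝ) ^ (lmax - 1) - 2 ^ lmin) ∧
    ((3 / (n : ℝ)) * ((2 : ℝ) ^ (lmax - 1) - 2 ^ lmin) = 0 ↔ lmin = lmax - 1) := by
  have hn0 : (0 : ℝ) < n := by positivity
  have hle : lmin ≤ lmax - 1 := by omega
  have hmono : (2 : ℝ) ^ lmin ≤ 2 ^ (lmax - 1) :=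
    pow_le_pow_right₀ (by norm_num) hle
  have hL : L = (L - {lmax, lmax, lmin}) + {lmax, lmax, lmin} :=
    (tsub_add_cancel_of_le hsub).symm
  have hmax1 : (2 : ℝ) ^ lmax = 2 * 2 ^ (lmax - 1) := by
    rw [← pow_succ']
    congr 1
    omega
  constructor
  · rw [hL', hL]
    simp only [Multiset.map_add, Multiset.sum_add, Multiset.insert_eq_cons,
      Multiset.map_cons, Multiset.sum_cons, Multiset.map_singleton,
      Multiset.sum_singleton, add_tsub_cancel_right]
    rw [hmax1]
    field_simp
    ring
  refine ⟨mul_nonneg (by positivity) (sub_nonneg.2 hmono), ?_⟩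
  constructor
  · intro h
    rcases mul_eq_zero.1 h with h | h
    · exact absurd h (by positivity)
    · have heq : (2 : ℝ) ^ lmin = 2 ^ (lmax - 1) := by linarith [sub_eq_zero.1 h]
      by_contra hne
      have hlt' : lmin < lmax - 1 := lt_of_le_of_ne hle hne
      have : (2 : ℝ) ^ lmin < 2 ^ (lmax - 1) :=
        pow_lt_pow_right₀ one_lt_two hlt'
      linarith
  · intro h
    rw [h]
    ring
end

section
/- Among all multisets of leaf levels {l_1,...,l_n} of full binary trees with n leaves, the quantity Σ_i 2^{l_i} (and hence the mean network AoI) is minimized when the tree is fully balanced, i.e., when all leaf levels are either ⌊log₂ n⌋ or ⌈log₂ n⌉. -/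
private lemma two_sum {α : Type*} [AddCommMonoid α] (g : ℕ → α) (m : ℕ) :
    ∀ M : Multiset ℕ, (∀ l ∈ M, l = m ∨ l = m+1) →
      (M.map g).sum = M.count m • g m + M.count (m+1) • g (m+1) := by
  intro M
  induction M using Multiset.induction_on with
  | empty => simp
  | cons a M ih =>
    intro h
    have hM : ∀ l ∈ M, l = m ∨ l = m+1 := fun l hl => h l (Multiset.mem_cons_of_mem hl)
    rcases h a (Multiset.mem_cons_self a M) with rfl | rfl
    · rw [Multiset.map_cons, Multiset.sum_cons, ih hM,
        Multiset.count_cons_self, Multiset.count_cons_of_ne (by omega),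
        succ_nsmul]
      abel
    · rw [Multiset.map_cons, Multiset.sum_cons, ih hM,
        Multiset.count_cons_self, Multiset.count_cons_of_ne (by omega),
        succ_nsmul]
      abel

private lemma two_card (m : ℕ) (M : Multiset ℕ) (h : ∀ l ∈ M, l = m ∨ l = m+1) :
    M.count m + M.count (m+1) = Multiset.card M := by
  have := two_sum (fun _ => (1:ℕ)) m M h
  simpa using this.symm

private lemma two_kraft (m : ℕ) (M : Multiset ℕ) (h : ∀ l ∈ M, l = m ∨ l = m+1)
    (hk : (M.map fun l => ((2:ℚ) ^ l)⁻¹).sum = 1) :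
    2 * M.count m + M.count (m+1) = 2 ^ (m+1) := by
  have h1 := (two_sum (fun l => ((2:ℚ) ^ l)⁻¹) m M h).symm.trans hk
  rw [nsmul_eq_mul, nsmul_eq_mul] at h1
  have h2 : (2:ℚ) ^ m ≠ 0 := by positivity
  have h3 : (2:ℚ) ^ (m+1) ≠ 0 := by positivity
  have key : ((2 * M.count m + M.count (m+1) : ℕ) : ℚ) = ((2:ℚ) ^ (m+1)) := by
    push_cast
    rw [pow_succ] at h1 ⊢
    field_simp at h1
    have h4 : (2:ℚ) ^ m * (2 * (M.count m : ℚ) + M.count (m+1)) = 2 ^ m * (2 ^ m * 2) := by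
      linear_combination (2:ℚ) ^ m * h1
    exact mul_left_cancel₀ h2 h4
  exact_mod_cast key

private lemma sum_eq_aux (n a b a' b' m m' : ℕ) (hmm : m ≤ m')
    (h1 : a + b = n) (h2 : 2*a + b = 2^(m+1))
    (h1' : a' + b' = n) (h2' : 2*a' + b' = 2^(m'+1)) :
    a * 2^m + b * 2^(m+1) = a' * 2^m' + b' * 2^(m'+1) := by
  have e1 : (2:ℕ)^(m+1) = 2 * 2^m := by rw [pow_succ]; ring
  have e1' : (2:ℕ)^(m'+1) = 2 * 2^m' := by rw [pow_succ]; ring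
  have hn1 : 2^m' ≤ n := by omega
  have hn2 : n ≤ 2^(m+1) := by omega
  have hle : (2:ℕ)^m' ≤ 2^(m+1) := le_trans hn1 hn2
  have hmm' : m' ≤ m + 1 := by
    exact_mod_cast (Nat.pow_le_pow_iff_right (by norm_num : 1 < 2)).1 hle
  rcases (by omega : m' = m ∨ m' = m + 1) with rfl | rfl
  · have : a = a' ∧ b = b' := by omega
    rw [this.1, this.2]
  · have e2 : (2:ℕ)^(m+1+1) = 2 * 2^(m+1) := by rw [pow_succ]; ring
    have hn3 : n = 2^(m+1) := le_antisymm hn2 hn1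
    have : a = 0 ∧ b = n ∧ a' = n ∧ b' = 0 := by omega
    obtain ⟨ha, hb, ha', hb'⟩ := this
    subst ha hb ha' hb'
    omega

private lemma two_level_sum_eq (M M' : Multiset ℕ) (m m' : ℕ)
    (h : ∀ l ∈ M, l = m ∨ l = m+1) (hk : (M.map fun l => ((2:ℚ) ^ l)⁻¹).sum = 1)
    (h' : ∀ l ∈ M', l = m' ∨ l = m'+1) (hk' : (M'.map fun l => ((2:ℚ) ^ l)⁻¹).sum = 1)
    (hc : Multiset.card M = Multiset.card M') :
    (M.map fun l => (2:ℕ) ^ l).sum = (M'.map fun l => (2:ℕ) ^ l).sum := by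
  have s1 := two_sum (fun l => (2:ℕ) ^ l) m M h
  have s2 := two_sum (fun l => (2:ℕ) ^ l) m' M' h'
  rw [smul_eq_mul, smul_eq_mul] at s1 s2
  have c1 := two_card m M h
  have c2 := two_card m' M' h'
  have k1 := two_kraft m M h hk
  have k2 := two_kraft m' M' h' hk'
  rw [s1, s2]
  rcases le_total m m' with hmm | hmm
  · exact sum_eq_aux (Multiset.card M) _ _ _ _ _ _ hmm c1 k1 (by omega) k2
  · exact (sum_eq_aux (Multiset.card M) _ _ _ _ _ _ hmm (by omega) k2 c1 k1).symm

private lemma parity_count (d : ℕ) : ∀ M : Multiset ℕ, (∀ l ∈ M, l ≤ d) →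
    (M.map fun l => (2:ℕ)^(d-l)).sum % 2 = M.count d % 2 := by
  intro M
  induction M using Multiset.induction_on with
  | empty => simp
  | cons a M ih =>
    intro h
    have hM : ∀ l ∈ M, l ≤ d := fun l hl => h l (Multiset.mem_cons_of_mem hl)
    have hih := ih hM
    by_cases ha : a = d
    · subst ha
      rw [Multiset.map_cons, Multiset.sum_cons, Multiset.count_cons_self,
        Nat.sub_self, pow_zero]
      omega
    · have had : a < d := lt_of_le_of_ne (h a (Multiset.mem_cons_self a M)) ha
      have h2 : 2 ∣ 2^(d-a) := dvd_pow_self 2 (by omega)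
      rw [Multiset.map_cons, Multiset.sum_cons, Multiset.count_cons_of_ne (Ne.symm ha)]
      omega

private lemma exists_two_level (n : ℕ) (hn : 2 ≤ n) :
    ∀ N : ℕ, ∀ L : Multiset ℕ, (L.map fun l => (2:ℕ)^l).sum ≤ N →
    (∀ l ∈ L, 1 ≤ l) → Multiset.card L = n →
    (L.map fun l => ((2:ℚ) ^ l)⁻¹).sum = 1 →
    ∃ (M : Multiset ℕ) (m : ℕ), (∀ l ∈ M, l = m ∨ l = m+1) ∧ Multiset.card M = n ∧
      (M.map fun l => ((2:ℚ) ^ l)⁻¹).sum = 1 ∧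
      (M.map fun l => (2:ℕ)^l).sum ≤ (L.map fun l => (2:ℕ)^l).sum := by
  intro N
  induction N using Nat.strong_induction_on with
  | _ N ih =>
  intro L hSN hpos hcard hk
  have hL0 : L ≠ 0 := by
    intro h0; rw [h0] at hcard; simp at hcard; omega
  have hfs : L.toFinset.Nonempty := by
    rcases Multiset.exists_mem_of_ne_zero hL0 with ⟨x, hx⟩
    exact ⟨x, Multiset.mem_toFinset.2 hx⟩
  set s := L.toFinset.min' hfs with hsdef
  set d := L.toFinset.max' hfs with hddef
  have hsL : s ∈ L := Multiset.mem_toFinset.1 (L.toFinset.min'_mem hfs)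
  have hdL : d ∈ L := Multiset.mem_toFinset.1 (L.toFinset.max'_mem hfs)
  have hsle : ∀ l ∈ L, s ≤ l := fun l hl => L.toFinset.min'_le l (Multiset.mem_toFinset.2 hl)
  have hdge : ∀ l ∈ L, l ≤ d := fun l hl => L.toFinset.le_max' l (Multiset.mem_toFinset.2 hl)
  by_cases hcase : d ≤ s + 1
  · exact ⟨L, s, fun l hl => by have := hsle l hl; have := hdge l hl; omega,
      hcard, hk, le_rfl⟩
  · have hs1 : 1 ≤ s := hpos s hsL
    have hds : s + 2 ≤ d := by omega
    -- the ℚ identity: sum of 2^(d-l) equals 2^d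
    have hTQ : (L.map fun l => ((2:ℚ)^(d-l))).sum = 2^d := by
      have h1 : (L.map fun l => ((2:ℚ) ^ l)⁻¹ * 2^d).sum = 2^d := by
        rw [Multiset.sum_map_mul_right, hk, one_mul]
      rw [← h1]
      congr 1
      apply Multiset.map_congr rfl
      intro l hl
      have hld : l ≤ d := hdge l hl
      have h2 : (2:ℚ)^l ≠ 0 := by positivity
      rw [inv_mul_eq_div, eq_div_iff h2, ← pow_add]
      congr 1
      omega
    have hTN : (L.map fun l => (2:ℕ)^(d-l)).sum = 2^d := by
      have hcast : ((L.map fun l => (2:ℕ)^(d-l)).sum : ℚ)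
          = (L.map fun l => ((2:ℚ)^(d-l))).sum := by
        rw [Nat.cast_multiset_sum, Multiset.map_map]
        congr 1
        apply Multiset.map_congr rfl
        intro l _
        simp
      exact_mod_cast hcast.trans hTQ
    have hcd : 2 ≤ L.count d := by
      have h1 := parity_count d L hdge
      rw [hTN] at h1
      have h2 : 2 ∣ 2^d := dvd_pow_self 2 (by omega)
      have h3 : 1 ≤ L.count d := Multiset.one_le_count_iff_mem.2 hdL
      omega
    have hsd : s ≠ d := by omega
    have hd2 : d ∈ L.erase d := by
      rw [← Multiset.count_pos, Multiset.count_erase_self]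
      omega
    have hs2 : s ∈ (L.erase d).erase d := by
      rw [Multiset.mem_erase_of_ne hsd, Multiset.mem_erase_of_ne hsd]
      exact hsL
    set R := ((L.erase d).erase d).erase s with hRdef
    have hdecomp : L = d ::ₘ d ::ₘ s ::ₘ R := by
      rw [hRdef, Multiset.cons_erase hs2, Multiset.cons_erase hd2, Multiset.cons_erase hdL]
    set L' : Multiset ℕ := (d-1) ::ₘ (s+1) ::ₘ (s+1) ::ₘ R with hL'def
    have hRsub : ∀ l ∈ R, l ∈ L := by
      intro l hl
      exact Multiset.mem_of_mem_erase (Multiset.mem_of_mem_erase (Multiset.mem_of_mem_erase hl))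
    have hpos' : ∀ l ∈ L', 1 ≤ l := by
      intro l hl
      rw [hL'def, Multiset.mem_cons, Multiset.mem_cons, Multiset.mem_cons] at hl
      rcases hl with rfl | rfl | rfl | hl
      · omega
      · omega
      · omega
      · exact hpos l (hRsub l hl)
    have hcard' : Multiset.card L' = n := by
      have : Multiset.card L = Multiset.card L' := by
        rw [hdecomp, hL'def]; simp
      omega
    have hkq : (2:ℚ)^(d-1) ≠ 0 := by positivity
    have hks : (2:ℚ)^s ≠ 0 := by positivity
    have hkey : ((2:ℚ)^(d-1))⁻¹ + (((2:ℚ)^(s+1))⁻¹ + ((2:ℚ)^(s+1))⁻¹)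
        = ((2:ℚ)^d)⁻¹ + (((2:ℚ)^d)⁻¹ + ((2:ℚ)^s)⁻¹) := by
      obtain ⟨u, hu⟩ : ∃ u, d = u + 1 := ⟨d-1, by omega⟩
      rw [hu]
      simp only [Nat.add_sub_cancel]
      have h2u : (2:ℚ)^u ≠ 0 := by positivity
      rw [pow_succ, pow_succ]
      field_simp
      ring
    have hkraft' : (L'.map fun l => ((2:ℚ) ^ l)⁻¹).sum = 1 := by
      rw [hdecomp] at hk
      rw [hL'def]
      simp only [Multiset.map_cons, Multiset.sum_cons] at hk ⊢
      rw [← hk]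
      have := hkey
      linarith
    have hsum : (L'.map fun l => (2:ℕ)^l).sum < (L.map fun l => (2:ℕ)^l).sum := by
      conv_rhs => rw [hdecomp]
      rw [hL'def]
      simp only [Multiset.map_cons, Multiset.sum_cons]
      have h1 : (2:ℕ)^(s+1) ≤ 2^(d-1) := Nat.pow_le_pow_right (by omega) (by omega)
      have e1 : (2:ℕ)^d = 2*2^(d-1) := by
        rw [← pow_succ']
        congr 1
        omega
      have e2 : (2:ℕ)^(s+1) = 2*2^s := by rw [pow_succ]; ring
      have h0 : 1 ≤ (2:ℕ)^s := Nat.one_le_two_pow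
      omega
    have hlt : (L'.map fun l => (2:ℕ)^l).sum < N := by
      have := hSN
      omega
    obtain ⟨M, m, hM1, hM2, hM3, hMle⟩ :=
      ih _ hlt L' le_rfl hpos' hcard' hkraft'
    exact ⟨M, m, hM1, hM2, hM3, le_trans hMle hsum.le⟩



/-- Among all leaf-level multisets of full binary trees with `n` leaves
(equivalently, multisets of positive integers with Kraft sum 1), the quantity
`Σ 2^{l_i}` is minimized by any fully balanced configuration, i.e. one whose
levels all lie in `{⌊log₂ n⌋, ⌈log₂ n⌉}`. -/
theorem balanced_tree_minimizes_sum (n : ℕ) (hn : 2 ≤ n)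
    (L B : Multiset ℕ)
    (hLpos : ∀ l ∈ L, 1 ≤ l) (hLcard : L.card = n)
    (hLkraft : (L.map (fun l => ((2 : ℚ) ^ l)⁻¹)).sum = 1)
    (hBpos : ∀ l ∈ B, 1 ≤ l) (hBcard : B.card = n)
    (hBkraft : (B.map (fun l => ((2 : ℚ) ^ l)⁻¹)).sum = 1)
    (hBbal : ∀ l ∈ B, l = Nat.log 2 n ∨ l = Nat.clog 2 n) :
    (B.map (fun l => (2 : ℕ) ^ l)).sum ≤ (L.map (fun l => (2 : ℕ) ^ l)).sum := by

  obtain ⟨M, m, hM1, hM2, hM3, hMle⟩ :=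
    exists_two_level n hn _ L le_rfl hLpos hLcard hLkraft
  have hBtwo : ∀ l ∈ B, l = Nat.log 2 n ∨ l = Nat.log 2 n + 1 := by
    intro l hl
    have h1 : Nat.log 2 n ≤ Nat.clog 2 n := Nat.log_le_clog 2 n
    have h2 : Nat.clog 2 n ≤ Nat.log 2 n + 1 := by
      rw [Nat.clog_le_iff_le_pow (by norm_num)]
      exact (Nat.lt_pow_succ_log_self (by norm_num) n).le
    rcases hBbal l hl with rfl | h
    · left; rfl
    · omega
  have heq := two_level_sum_eq B M (Nat.log 2 n) m hBtwo hBkraft hM1 hM3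
    (by rw [hBcard, hM2])
  rw [heq]
  exact hMle
end

section
/- Among all multisets {l_1,...,l_n} of positive integers with Σ_i 2^{-l_i} = 1, the quantity Σ_i 2^{l_i} is maximized by the skewed configuration {1, 2, ..., n−1, n−1}, achieving value 3·2^{n−1} − 2. -/
private lemma exists_max (L : Multiset ℕ) (hL : L ≠ 0) : ∃ M, M ∈ L ∧ ∀ l ∈ L, l ≤ M := by
  have hne : L.toFinset.Nonempty := by
    rw [Multiset.toFinset_nonempty]; exact hL
  refine ⟨L.toFinset.max' hne, ?_, ?_⟩
  · have := L.toFinset.max'_mem hne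
    simpa using this
  · intro l hl
    exact L.toFinset.le_max' l (by simpa using hl)

private lemma count_max_ge_two (L : Multiset ℕ) (M : ℕ) (hM : M ∈ L)
    (hmax : ∀ l ∈ L, l ≤ M) (h1 : ∀ l ∈ L, 1 ≤ l)
    (heq : (L.map (fun l => 2 ^ (M - l))).sum = 2 ^ M) : 2 ≤ L.count M := by
  have hM1 : 1 ≤ M := h1 M hM
  classical
  -- split L by whether element equals M
  have hsplit := Multiset.filter_add_not (fun l => M = l) L
  have hL1 : ((L.filter (fun l => M = l)).map (fun l => 2 ^ (M - l))).sum = L.count M := by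
    rw [Multiset.count_eq_card_filter_eq]
    have : (L.filter (fun l => M = l)).map (fun l => 2 ^ (M - l))
        = (L.filter (fun l => M = l)).map (fun _ => 1) := by
      apply Multiset.map_congr rfl
      intro x hx
      have := (Multiset.mem_filter.mp hx).2
      simp [← this]
    rw [this]
    simp [Multiset.map_const']
  have hdvd : 2 ∣ ((L.filter (fun l => ¬ M = l)).map (fun l => 2 ^ (M - l))).sum := by
    apply Multiset.dvd_sum
    intro x hx
    obtain ⟨y, hy, rfl⟩ := Multiset.mem_map.mp hx
    have hyL := (Multiset.mem_filter.mp hy).1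
    have hyne := (Multiset.mem_filter.mp hy).2
    have hylt : y < M := lt_of_le_of_ne (hmax y hyL) (fun h => hyne h.symm)
    have : 1 ≤ M - y := by omega
    exact dvd_pow_self 2 (by omega) |>.trans (pow_dvd_pow 2 this)
  have hsum : (L.count M) + ((L.filter (fun l => ¬ M = l)).map (fun l => 2 ^ (M - l))).sum
      = 2 ^ M := by
    rw [← hL1, ← Multiset.sum_add, ← Multiset.map_add, hsplit, heq]
  have h2M : 2 ∣ 2 ^ M := dvd_pow_self 2 (by omega)
  have hcnt1 : 1 ≤ L.count M := Multiset.one_le_count_iff_mem.mpr hM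
  obtain ⟨a, ha⟩ := hdvd
  obtain ⟨b, hb⟩ := h2M
  omega

private lemma eq_at_max (L : Multiset ℕ) (M m : ℕ) (hMm : M ≤ m)
    (hmax : ∀ l ∈ L, l ≤ M)
    (heq : (L.map (fun l => 2 ^ (m - l))).sum = 2 ^ m) :
    (L.map (fun l => 2 ^ (M - l))).sum = 2 ^ M := by
  have key : (L.map (fun l => 2 ^ (m - l))).sum
      = 2 ^ (m - M) * (L.map (fun l => 2 ^ (M - l))).sum := by
    rw [← Multiset.sum_map_mul_left]
    apply congrArg
    apply Multiset.map_congr rfl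
    intro x hx
    have hxM := hmax x hx
    rw [← pow_add]
    congr 1
    omega
  have h2m : (2:ℕ) ^ m = 2 ^ (m - M) * 2 ^ M := by rw [← pow_add]; congr 1; omega
  rw [key, h2m] at heq
  exact Nat.eq_of_mul_eq_mul_left (Nat.pow_pos (by norm_num)) heq

private lemma key_lemma : ∀ n : ℕ, 2 ≤ n → ∀ L : Multiset ℕ, (∀ l ∈ L, 1 ≤ l) → L.card = n →
    ∀ m : ℕ, (∀ l ∈ L, l ≤ m) → (L.map (fun l => 2 ^ (m - l))).sum = 2 ^ m →
    (∀ l ∈ L, l ≤ n - 1) ∧ (L.map (fun l => (2:ℕ) ^ l)).sum ≤ 3 * 2 ^ (n - 1) - 2 := by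
  intro n hn
  induction n, hn using Nat.le_induction with
  | base =>
    intro L h1 hcard m hbd heq
    classical
    have hL0 : L ≠ 0 := by
      intro h; rw [h] at hcard; simp at hcard
    obtain ⟨M, hM, hmax⟩ := exists_max L hL0
    have heqM := eq_at_max L M m (hbd M hM) hmax heq
    have hcnt := count_max_ge_two L M hM hmax h1 heqM
    have hrep : Multiset.replicate 2 M ≤ L := Multiset.le_count_iff_replicate_le.mp hcnt
    have hLrep : L = Multiset.replicate 2 M := by
      apply (Multiset.eq_of_le_of_card_le hrep (by simp [hcard])).symm
    have hM1 : M = 1 := by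
      rw [hLrep] at heqM
      simp [Multiset.map_replicate, Multiset.sum_replicate] at heqM
      -- heqM : 2 * 2 ^ (M - M) = 2 ^ M  (or some form)
      have h : (2:ℕ) = 2 ^ M := by simpa using heqM
      have hMpos := h1 M hM
      by_contra hne
      have h4 : (4:ℕ) ≤ 2 ^ M := by
        calc (4:ℕ) = 2 ^ 2 := by norm_num
        _ ≤ 2 ^ M := Nat.pow_le_pow_right (by norm_num) (by omega)
      omega
    constructor
    · intro l hl; have := hmax l hl; omega
    · rw [hLrep, hM1]
      simp [Multiset.map_replicate, Multiset.sum_replicate]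
  | succ n hn ih =>
    intro L h1 hcard m hbd heq
    classical
    have hL0 : L ≠ 0 := by
      intro h; rw [h] at hcard; simp at hcard
    obtain ⟨M, hM, hmax⟩ := exists_max L hL0
    have heqM := eq_at_max L M m (hbd M hM) hmax heq
    have hcnt := count_max_ge_two L M hM hmax h1 heqM
    have hrep : Multiset.replicate 2 M ≤ L := Multiset.le_count_iff_replicate_le.mp hcnt
    set L' := L - Multiset.replicate 2 M with hL'def
    have hLsplit : L' + Multiset.replicate 2 M = L := tsub_add_cancel_of_le hrep
    have hL'card : L'.card = n - 1 := by
      have := congrArg Multiset.card hLsplit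
      simp [hcard] at this
      omega
    have hL'le : L' ≤ L := tsub_le_self
    have hM2 : 2 ≤ M := by
      by_contra h
      have hM1 : M = 1 := by have := h1 M hM; omega
      -- all elements equal 1, sum of 2^(M-l) = card = n+1 = 2
      have hall : ∀ l ∈ L, l = 1 := by
        intro l hl; have := h1 l hl; have := hmax l hl; omega
      have : (L.map (fun l => 2 ^ (M - l))).sum = L.card := by
        have : L.map (fun l => 2 ^ (M - l)) = L.map (fun _ => 1) := by
          apply Multiset.map_congr rfl
          intro x hx; simp [hall x hx, hM1]
        rw [this]; simp [Multiset.map_const']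
      rw [heqM, hM1, hcard] at this
      simp at this
      omega
    set L₂ : Multiset ℕ := (M - 1) ::ₘ L' with hL₂def
    have hL₂card : L₂.card = n := by
      simp [hL₂def, hL'card]; omega
    have hL₂pos : ∀ l ∈ L₂, 1 ≤ l := by
      intro l hl
      rcases Multiset.mem_cons.mp hl with h | h
      · omega
      · exact h1 l (Multiset.mem_of_le hL'le h)
    have hL₂bd : ∀ l ∈ L₂, l ≤ M := by
      intro l hl
      rcases Multiset.mem_cons.mp hl with h | h
      · omega
      · exact hmax l (Multiset.mem_of_le hL'le h)
    -- sum over L' from sum over L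
    have hsplit : (L'.map (fun l => 2 ^ (M - l))).sum + 2 = 2 ^ M := by
      have : (L.map (fun l => 2 ^ (M - l))).sum
          = (L'.map (fun l => 2 ^ (M - l))).sum + ((Multiset.replicate 2 M).map (fun l => 2 ^ (M - l))).sum := by
        rw [← Multiset.sum_add, ← Multiset.map_add, hLsplit]
      rw [heqM] at this
      simp [Multiset.map_replicate, Multiset.sum_replicate] at this
      omega
    have hL₂eq : (L₂.map (fun l => 2 ^ (M - l))).sum = 2 ^ M := by
      rw [hL₂def]
      simp only [Multiset.map_cons, Multiset.sum_cons]
      have hMM : M - (M - 1) = 1 := by omega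
      rw [hMM]
      omega
    obtain ⟨hbd₂, hsum₂⟩ := ih L₂ hL₂pos hL₂card M hL₂bd hL₂eq
    have hMn : M ≤ n := by
      have := hbd₂ (M - 1) (Multiset.mem_cons_self _ _)
      omega
    constructor
    · intro l hl
      have := hmax l hl
      simp only [Nat.add_sub_cancel]
      omega
    · -- arithmetic
      have hLsum : (L.map (fun l => (2:ℕ) ^ l)).sum
          = (L'.map (fun l => (2:ℕ) ^ l)).sum + 2 * 2 ^ M := by
        have : (L.map (fun l => (2:ℕ) ^ l)).sum
            = (L'.map (fun l => (2:ℕ) ^ l)).sum + ((Multiset.replicate 2 M).map (fun l => (2:ℕ) ^ l)).sum := by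
          rw [← Multiset.sum_add, ← Multiset.map_add, hLsplit]
        rw [this]
        simp [Multiset.map_replicate, Multiset.sum_replicate]
        ring
      have hL₂sum : (L₂.map (fun l => (2:ℕ) ^ l)).sum
          = 2 ^ (M - 1) + (L'.map (fun l => (2:ℕ) ^ l)).sum := by
        rw [hL₂def]; simp
      have hpow4 : 2 * 2 ^ M = 4 * 2 ^ (M - 1) := by
        have h : (2:ℕ) ^ M = 2 ^ (M - 1) * 2 := by
          rw [← pow_succ]; congr 1; omega
        omega
      have hpowle : (2:ℕ) ^ (M - 1) ≤ 2 ^ (n - 1) :=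
        Nat.pow_le_pow_right (by norm_num) (by omega)
      have hpow2 : 2 ≤ (2:ℕ) ^ (n - 1) := by
        calc (2:ℕ) = 2 ^ 1 := by norm_num
        _ ≤ 2 ^ (n - 1) := Nat.pow_le_pow_right (by norm_num) (by omega)
      have hpown : (2:ℕ) ^ (n + 1 - 1) = 2 * 2 ^ (n - 1) := by
        have : n + 1 - 1 = (n - 1) + 1 := by omega
        rw [this]; ring
      rw [hpown]
      omega

private lemma kraft_skew (k : ℕ) :
    ((Multiset.range k).map (fun i => ((2:ℚ) ^ (i + 1))⁻¹)).sum = 1 - ((2:ℚ) ^ k)⁻¹ := by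
  induction k with
  | zero => simp
  | succ k ih =>
    rw [Multiset.range_succ]
    simp only [Multiset.map_cons, Multiset.sum_cons, ih]
    have h1 : (2:ℚ) ^ (k + 1) = 2 * 2 ^ k := by ring
    have h2 : (2:ℚ) ^ k ≠ 0 := by positivity
    field_simp
    ring

private lemma pow_skew (k : ℕ) :
    ((Multiset.range k).map (fun i => (2:ℕ) ^ (i + 1))).sum = 2 ^ (k + 1) - 2 := by
  induction k with
  | zero => simp
  | succ k ih =>
    rw [Multiset.range_succ]
    simp only [Multiset.map_cons, Multiset.sum_cons, ih]
    have h1 : (2:ℕ) ^ (k + 1 + 1) = 2 * 2 ^ (k + 1) := by ring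
    have h2 : 2 ≤ (2:ℕ) ^ (k + 1) := by
      calc (2:ℕ) = 2 ^ 1 := by norm_num
      _ ≤ 2 ^ (k + 1) := Nat.pow_le_pow_right (by norm_num) (by omega)
    omega

/-- Among all multisets `{l_1,...,l_n}` of positive integers with `Σ 2^{-l_i} = 1`
(`n ≥ 2`), the quantity `Σ 2^{l_i}` is at most `3·2^{n-1} - 2`, and the skewed
configuration `{1, 2, ..., n-1, n-1}` satisfies the constraints and attains this value. -/
theorem skewed_tree_maximizes_sum (n : ℕ) (hn : 2 ≤ n) :
    (∀ L : Multiset ℕ, (∀ l ∈ L, 1 ≤ l) → L.card = n →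
      (L.map (fun l => ((2 : ℚ) ^ l)⁻¹)).sum = 1 →
      (L.map (fun l => (2 : ℕ) ^ l)).sum ≤ 3 * 2 ^ (n - 1) - 2) ∧
    (∀ S : Multiset ℕ, S = ((Multiset.range (n - 1)).map (· + 1)) + {n - 1} →
      (∀ l ∈ S, 1 ≤ l) ∧ S.card = n ∧
      (S.map (fun l => ((2 : ℚ) ^ l)⁻¹)).sum = 1 ∧
      (S.map (fun l => (2 : ℕ) ^ l)).sum = 3 * 2 ^ (n - 1) - 2) := by
  constructor
  · intro L h1 hcard hkraft
    -- convert rational equation to natural-number equation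
    set m := L.sum with hm
    have hbd : ∀ l ∈ L, l ≤ m := fun l hl => Multiset.le_sum_of_mem hl
    have hnat : (L.map (fun l => 2 ^ (m - l))).sum = 2 ^ m := by
      have hcast : (((L.map (fun l => 2 ^ (m - l))).sum : ℕ) : ℚ) = ((2 ^ m : ℕ) : ℚ) := by
        rw [Nat.cast_multiset_sum, Multiset.map_map]
        have hmc : L.map (Nat.cast ∘ (fun l => 2 ^ (m - l)))
            = L.map (fun l => (2:ℚ) ^ m * ((2:ℚ) ^ l)⁻¹) := by
          apply Multiset.map_congr rfl
          intro x hx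
          have hxm := hbd x hx
          simp only [Function.comp_apply]
          push_cast
          have hx2 : ((2:ℚ) ^ x) ≠ 0 := by positivity
          field_simp
          rw [← pow_add]
          congr 1
          omega
        rw [hmc, Multiset.sum_map_mul_left, hkraft]
        push_cast
        ring
      exact_mod_cast hcast
    exact (key_lemma n hn L h1 hcard m hbd hnat).2
  · intro S hS
    subst hS
    refine ⟨?_, ?_, ?_, ?_⟩
    · intro l hl
      rcases Multiset.mem_add.mp hl with h | h
      · obtain ⟨i, _, rfl⟩ := Multiset.mem_map.mp h; omega
      · simp at h; omega
    · simp; omega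
    · rw [Multiset.map_add, Multiset.sum_add, Multiset.map_map]
      have : ((Multiset.range (n - 1)).map ((fun l => ((2:ℚ) ^ l)⁻¹) ∘ (· + 1))).sum
          = 1 - ((2:ℚ) ^ (n - 1))⁻¹ := by
        rw [← kraft_skew (n - 1)]
        rfl
      rw [this]
      simp
    · rw [Multiset.map_add, Multiset.sum_add, Multiset.map_map]
      have h1 : ((Multiset.range (n - 1)).map ((fun l => (2:ℕ) ^ l) ∘ (· + 1))).sum
          = 2 ^ (n - 1 + 1) - 2 := by
        rw [← pow_skew (n - 1)]
        rfl
      rw [h1]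
      simp
      have h2 : (2:ℕ) ^ (n - 1 + 1) = 2 * 2 ^ (n - 1) := by ring
      have h3 : 2 ≤ (2:ℕ) ^ (n - 1) := by
        calc (2:ℕ) = 2 ^ 1 := by norm_num
        _ ≤ 2 ^ (n - 1) := Nat.pow_le_pow_right (by norm_num) (by omega)
      omega
end

section
/- For a settled tree where user i holds the leaf schedule at level l_i, the mean network AoI Δ̄ = (1/n) Σ_i (2^{l_i}+1)/2 satisfies Δ̄ ≥ (n+1)/2, with equality iff n is a power of two and all l_i = log₂ n. -/
lemma multiset_sum_eq_zero_iff' {M : Multiset ℝ} (h : ∀ x ∈ M, 0 ≤ x) :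
    M.sum = 0 ↔ ∀ x ∈ M, x = 0 := by
  induction M using Multiset.induction with
  | empty => simp
  | cons a s ih =>
    simp only [Multiset.sum_cons, Multiset.mem_cons] at *
    have ha := h a (Or.inl rfl)
    have hs : ∀ x ∈ s, 0 ≤ x := fun x hx => h x (Or.inr hx)
    have hs0 : 0 ≤ s.sum := Multiset.sum_nonneg hs
    constructor
    · intro h0
      have ha0 : a = 0 := by linarith
      have hss : s.sum = 0 := by linarith
      rintro x (rfl | hx)
      · exact ha0
      · exact ((ih hs).1 hss) x hx
    · intro hall
      have : s.sum = 0 := (ih hs).2 (fun x hx => hall x (Or.inr hx))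
      rw [hall a (Or.inl rfl), this, add_zero]

lemma msum_split' (M : Multiset ℕ) (f1 f2 : ℕ → ℝ) (c : ℝ) :
    (M.map (fun l => f1 l + f2 l - c)).sum
      = (M.map f1).sum + (M.map f2).sum - M.card * c := by
  induction M using Multiset.induction with
  | empty => simp
  | cons a s ih => simp [ih]; ring

/-- For a settled tree with leaf levels `l_i` satisfying the Kraft equality,
the mean network AoI `(1/n) Σ (2^{l_i}+1)/2` is at least `(n+1)/2`, with equality
iff `n` is a power of two and all levels equal `log₂ n` (i.e. `2^{l_i} = n` for all `i`). -/
theorem settled_tree_aoi_lower_bound (n : ℕ) (hn : 2 ≤ n)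
    (L : Multiset ℕ) (hpos : ∀ l ∈ L, 1 ≤ l) (hcard : L.card = n)
    (hkraft : (L.map (fun l => ((2 : ℚ) ^ l)⁻¹)).sum = 1) :
    ((n : ℝ) + 1) / 2 ≤ (1 / n) * (L.map (fun l => ((2 : ℝ) ^ l + 1) / 2)).sum ∧
    ((1 / (n : ℝ)) * (L.map (fun l => ((2 : ℝ) ^ l + 1) / 2)).sum = ((n : ℝ) + 1) / 2
      ↔ ∀ l ∈ L, 2 ^ l = n) := by
  have hn0 : (0:ℝ) < n := by exact_mod_cast Nat.lt_of_lt_of_le two_pos hn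
  have hkR : (L.map (fun l => ((2:ℝ) ^ l)⁻¹)).sum = 1 := by
    have := congrArg (fun q : ℚ => (q : ℝ)) hkraft
    simpa [Rat.cast_multiset_sum, Multiset.map_map, Function.comp] using this
  set S := (L.map (fun l => (2:ℝ) ^ l)).sum with hS
  set g : ℕ → ℝ := fun l => (2:ℝ)^l + (n:ℝ)^2 * ((2:ℝ)^l)⁻¹ - 2*n with hg
  have hgsum : (L.map g).sum = S - (n:ℝ)^2 := by
    rw [hg, msum_split' L _ (fun l => (n:ℝ)^2 * ((2:ℝ)^l)⁻¹) (2*n),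
      Multiset.sum_map_mul_left, hkR, hcard]
    ring
  have hkey : ∀ l : ℕ, g l = ((2:ℝ)^l - n)^2 / 2^l := by
    intro l
    have hp : (0:ℝ) < 2 ^ l := by positivity
    rw [hg]; field_simp; ring
  have hgnonneg : ∀ x ∈ L.map g, 0 ≤ x := by
    rintro x hx
    obtain ⟨l, hl, rfl⟩ := Multiset.mem_map.1 hx
    rw [hkey l]; positivity
  have hSge : (n:ℝ)^2 ≤ S := by
    have h1 := Multiset.sum_nonneg hgnonneg
    rw [hgsum] at h1; linarith
  have htot : (L.map (fun l => ((2:ℝ) ^ l + 1) / 2)).sum = (S + n) / 2 := by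
    have h1 : (fun l => ((2:ℝ) ^ l + 1) / 2) = fun l => (1/2) * (2:ℝ)^l + (1/2) - 0 := by
      funext l; ring
    rw [h1, msum_split' L _ (fun _ => (1/2:ℝ)) 0, Multiset.sum_map_mul_left]
    have h2 : (L.map (fun _ => (1/2:ℝ))).sum = L.card * (1/2) := by
      rw [Multiset.map_const', Multiset.sum_replicate, nsmul_eq_mul]
    rw [h2, hcard]; ring
  constructor
  · rw [htot, one_div, ← div_eq_inv_mul, le_div_iff₀ hn0]
    nlinarith
  · rw [htot]
    have heq : 1/(n:ℝ) * ((S+n)/2) = ((n:ℝ)+1)/2 ↔ S = (n:ℝ)^2 := by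
      rw [div_mul_eq_mul_div, one_mul, div_eq_div_iff hn0.ne' (by norm_num : (2:ℝ) ≠ 0)]
      constructor
      · intro h; nlinarith
      · intro h; rw [h]; ring
    rw [heq]
    constructor
    · intro hSeq l hl
      have h0 : (L.map g).sum = 0 := by rw [hgsum, hSeq]; ring
      have hz := (multiset_sum_eq_zero_iff' hgnonneg).1 h0 (g l)
        (Multiset.mem_map_of_mem g hl)
      rw [hkey l] at hz
      have hp : (0:ℝ) < 2 ^ l := by positivity
      have h3 : (2:ℝ)^l = n := by
        field_simp at hz; nlinarith
      have : ((2^l : ℕ) : ℝ) = (n : ℝ) := by push_cast; exact h3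
      exact_mod_cast this
    · intro hall
      have hmap : L.map (fun l => (2:ℝ)^l) = L.map (fun _ => (n:ℝ)) := by
        apply Multiset.map_congr rfl
        intro l hl
        have := hall l hl
        push_cast [← this]
        ring
      rw [hS, hmap, Multiset.map_const', Multiset.sum_replicate, hcard, nsmul_eq_mul]
      ring
end

section
/- In a full binary tree with n ≥ 2 leaves that is not fully balanced (i.e., l_max − l_min ≥ 2 among leaf levels), there exist two sibling leaves at level l_max and a leaf at level l_min, so the balancing operation of Theorem 1 is applicable and strictly decreases Σ 2^{l_i}. -/
/-- In a full binary tree with `n ≥ 2` leaves that is not fully balanced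
(`l_max − l_min ≥ 2` among the leaf levels), the multiset of leaf levels contains two
copies of `l_max` and one copy of `l_min`, so the balancing operation is applicable,
and it strictly decreases `Σ 2^{l_i}`. -/
theorem balancing_applicable_and_strict (n : ℕ) (hn : 2 ≤ n)
    (L : Multiset ℕ) (hpos : ∀ l ∈ L, 1 ≤ l) (hcard : L.card = n)
    (hkraft : (L.map (fun l => ((2 : ℚ) ^ l)⁻¹)).sum = 1)
    (lmax lmin : ℕ)
    (hmaxmem : lmax ∈ L) (hmax : ∀ l ∈ L, l ≤ lmax)
    (hminmem : lmin ∈ L) (hmin : ∀ l ∈ L, lmin ≤ l)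
    (hgap : lmin + 2 ≤ lmax) :
    ({lmax, lmax, lmin} : Multiset ℕ) ≤ L ∧
    (((L - {lmax, lmax, lmin}) + {lmax - 1, lmin + 1, lmin + 1}).map
        (fun l => (2 : ℕ) ^ l)).sum
      < (L.map (fun l => (2 : ℕ) ^ l)).sum := by
  have hlmax1 : 1 ≤ lmax := by have := hpos lmax hmaxmem; omega
  -- Step A: natural-number Kraft equality
  have hS : (L.map (fun l => (2 : ℕ) ^ (lmax - l))).sum = 2 ^ lmax := by
    have h1 : (L.map (fun l => ((2 : ℕ) ^ (lmax - l) : ℚ))).sum = 2 ^ lmax := by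
      have hcong : L.map (fun l => ((2 : ℕ) ^ (lmax - l) : ℚ)) =
          L.map (fun l => (2 : ℚ) ^ lmax * ((2 : ℚ) ^ l)⁻¹) := by
        apply Multiset.map_congr rfl
        intro l hl
        have hle : l ≤ lmax := hmax l hl
        push_cast
        rw [pow_sub₀ (2 : ℚ) (by norm_num) hle]
      rw [hcong, Multiset.sum_map_mul_left, hkraft, mul_one]
    have h2 : ((L.map (fun l => (2 : ℕ) ^ (lmax - l))).sum : ℚ) = 2 ^ lmax := by
      rw [Nat.cast_multiset_sum, Multiset.map_map, ← h1]
      apply congrArg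
      apply Multiset.map_congr rfl
      intro l _
      simp
    exact_mod_cast h2
  -- Step B: count of lmax is at least 2
  have hk2 : 2 ≤ L.count lmax := by
    have hdecomp : L.filter (· = lmax) + L.filter (fun l => ¬ l = lmax) = L :=
      Multiset.filter_add_not _ _
    have hfeq : L.filter (· = lmax) = Multiset.replicate (L.count lmax) lmax :=
      Multiset.filter_eq' L lmax
    have hsum : (L.map (fun l => (2 : ℕ) ^ (lmax - l))).sum =
        ((L.filter (· = lmax)).map (fun l => (2 : ℕ) ^ (lmax - l))).sum +
        ((L.filter (fun l => ¬ l = lmax)).map (fun l => (2 : ℕ) ^ (lmax - l))).sum := by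
      rw [← Multiset.sum_add, ← Multiset.map_add, hdecomp]
    have h1 : ((L.filter (· = lmax)).map (fun l => (2 : ℕ) ^ (lmax - l))).sum
        = L.count lmax := by
      rw [hfeq, Multiset.map_replicate, Multiset.sum_replicate]
      simp
    have h2 : 2 ∣ ((L.filter (fun l => ¬ l = lmax)).map (fun l => (2 : ℕ) ^ (lmax - l))).sum := by
      apply Multiset.dvd_sum
      intro x hx
      obtain ⟨l, hl, rfl⟩ := Multiset.mem_map.mp hx
      have hl' := Multiset.mem_filter.mp hl
      have : l < lmax := lt_of_le_of_ne (hmax l hl'.1) hl'.2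
      exact dvd_pow_self 2 (by omega)
    have hdvd : 2 ∣ (2 : ℕ) ^ lmax := dvd_pow_self 2 (by omega)
    rw [hS, h1] at hsum
    have hc : 0 < L.count lmax := Multiset.count_pos.mpr hmaxmem
    obtain ⟨a, ha⟩ := h2
    obtain ⟨b, hb⟩ := hdvd
    omega
  -- Step C: submultiset
  have hne : lmin ≠ lmax := by omega
  have hm : ({lmax, lmax, lmin} : Multiset ℕ) ≤ L := by
    rw [Multiset.le_iff_count]
    intro a
    by_cases h1 : a = lmax
    · subst h1
      simp [Multiset.count_cons, hne.symm]
      omega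
    · by_cases h2 : a = lmin
      · subst h2
        have : 1 ≤ L.count a := Multiset.count_pos.mpr hminmem
        simp [Multiset.count_cons, h1]
        omega
      · simp [Multiset.count_cons, h1, h2]
  refine ⟨hm, ?_⟩
  -- Step D: strict decrease
  have hsplit : (L.map (fun l => (2 : ℕ) ^ l)).sum =
      ((L - {lmax, lmax, lmin}).map (fun l => (2 : ℕ) ^ l)).sum +
      (({lmax, lmax, lmin} : Multiset ℕ).map (fun l => (2 : ℕ) ^ l)).sum := by
    conv_lhs => rw [← tsub_add_cancel_of_le hm]
    rw [Multiset.map_add, Multiset.sum_add]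
  rw [Multiset.map_add, Multiset.sum_add, hsplit]
  apply add_lt_add_right
  simp only [Multiset.insert_eq_cons, Multiset.map_cons, Multiset.map_singleton,
    Multiset.sum_cons, Multiset.sum_singleton]
  have e1 : (2 : ℕ) ^ (lmin + 1) + 2 ^ (lmin + 1) = 2 ^ (lmin + 2) := by ring
  have e2 : (2 : ℕ) ^ (lmin + 2) ≤ 2 ^ lmax := Nat.pow_le_pow_right (by norm_num) hgap
  have e3 : (2 : ℕ) ^ (lmax - 1) < 2 ^ lmax := Nat.pow_lt_pow_right (by norm_num) (by omega)
  omega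
end
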